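/- arXiv:cs/0508083 — 6 statements merged into one kernel-verified Lean document; each statement's English description precedes it below -/
import Mathlib

section
/- For b > -1 with b ≠ 0, the minimum over all real-valued length vectors l satisfying the Kraft inequality Σ 2^(-l_i) ≤ 1 of the β-exponential average F_b(p,l) = (1/b)·log₂(Σ_i p_i·2^(b·l_i)) equals the Rényi entropy of order α = 1/(1+b), namely H_α(p) = (1/(1-α))·log₂(Σ_i p_i^α). -/
open Real Finset

theorem exp_average_min_is_renyi (n : ℕ) (hn : 1 ≤ n) (p : Fin n → ℝ)
    (hp : ∀ i, 0 < p i) (hsum : ∑ i, p i = 1) (b : ℝ) (hb : -1 < b) (hb0 : b ≠ 0) :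
    IsLeast
      {x : ℝ | ∃ l : Fin n → ℝ, (∑ i, (2 : ℝ) ^ (-(l i)) ≤ 1) ∧
        x = (1 / b) * Real.logb 2 (∑ i, p i * (2 : ℝ) ^ (b * l i))}
      ((1 / (1 - 1 / (1 + b))) * Real.logb 2 (∑ i, p i ^ (1 / (1 + b)))) := by
  have hb1 : (0:ℝ) < 1 + b := by linarith
  set α : ℝ := 1 / (1 + b) with hαdef
  have hα0 : 0 < α := by positivity
  have hα1 : α * (1 + b) = 1 := by rw [hαdef]; field_simp
  have hS0 : 0 < ∑ i, p i ^ α :=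
    Finset.sum_pos (fun i _ => rpow_pos_of_pos (hp i) _) ⟨⟨0, hn⟩, Finset.mem_univ _⟩
  set S : ℝ := ∑ i, p i ^ α with hSdef
  have h1mα : (1:ℝ) - α = b / (1 + b) := by rw [hαdef]; field_simp; ring
  have hcoef : 1 / (1 - α) = (1 + b) / b := by rw [h1mα, one_div_div]
  constructor
  · -- membership: optimal lengths
    refine ⟨fun i => -Real.logb 2 (p i ^ α / S), ?_, ?_⟩
    · have h2 : ∀ i : Fin n, (2:ℝ) ^ (-(-Real.logb 2 (p i ^ α / S))) = p i ^ α / S := by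
        intro i
        rw [neg_neg, Real.rpow_logb two_pos (by norm_num) (div_pos (rpow_pos_of_pos (hp i) _) hS0)]
      rw [Finset.sum_congr rfl (fun i _ => h2 i), ← Finset.sum_div, ← hSdef,
        div_self hS0.ne']
    · have hterm : ∀ i : Fin n,
          p i * (2:ℝ) ^ (b * -Real.logb 2 (p i ^ α / S)) = S ^ b * p i ^ α := by
        intro i
        have hc : (0:ℝ) < p i ^ α / S := div_pos (rpow_pos_of_pos (hp i) _) hS0
        have hlog : b * -Real.logb 2 (p i ^ α / S)
            = Real.logb 2 ((p i ^ α / S) ^ (-b)) := by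
          rw [Real.logb_rpow_eq_mul_logb_of_pos hc]; ring
        rw [hlog, Real.rpow_logb two_pos (by norm_num) (rpow_pos_of_pos hc _),
          Real.div_rpow (rpow_nonneg (hp i).le _) hS0.le,
          ← Real.rpow_mul (hp i).le, Real.rpow_neg hS0.le, div_eq_mul_inv, inv_inv]
        have hexp : 1 + α * (-b) = α := by nlinarith [hα1]
        calc p i * (p i ^ (α * -b) * S ^ b)
            = (p i ^ (1:ℝ) * p i ^ (α * -b)) * S ^ b := by
              rw [Real.rpow_one]; ring
          _ = S ^ b * p i ^ α := by
              rw [← Real.rpow_add (hp i), hexp]; ring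
      rw [Finset.sum_congr rfl (fun i _ => hterm i), ← Finset.mul_sum, ← hSdef,
        ← Real.rpow_add_one hS0.ne', Real.logb_rpow_eq_mul_logb_of_pos hS0, hcoef]
      ring
  · -- lower bound
    rintro x ⟨l, hK, rfl⟩
    set q : Fin n → ℝ := fun i => (2:ℝ) ^ (-(l i)) with hqdef
    have hq0 : ∀ i, 0 < q i := fun i => rpow_pos_of_pos two_pos _
    have hqs : ∑ i, q i ≤ 1 := hK
    have hqsum0 : (0:ℝ) ≤ ∑ i, q i := Finset.sum_nonneg fun i _ => (hq0 i).le
    have h2b : ∀ i, (2:ℝ) ^ (b * l i) = q i ^ (-b) := by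
      intro i
      rw [hqdef]
      rw [← Real.rpow_mul (by norm_num : (0:ℝ) ≤ 2)]
      congr 1; ring
    have hTsum : (∑ i, p i * (2:ℝ) ^ (b * l i)) = ∑ i, p i * q i ^ (-b) :=
      Finset.sum_congr rfl fun i _ => by rw [h2b i]
    rw [hTsum]
    set T : ℝ := ∑ i, p i * q i ^ (-b) with hTdef
    have hT0 : 0 < T :=
      Finset.sum_pos (fun i _ => mul_pos (hp i) (rpow_pos_of_pos (hq0 i) _))
        ⟨⟨0, hn⟩, Finset.mem_univ _⟩
    rw [hcoef]
    rcases lt_or_gt_of_ne hb0 with hbneg | hbpos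
    · -- b < 0 : show T ≤ S ^ (1+b)
      have hP : (1:ℝ) < α := by
        rw [hαdef]; rw [lt_div_iff₀ hb1]; linarith
      have hpq : Real.HolderConjugate α (1 / (-b)) := by
        refine Real.holderConjugate_iff.mpr ⟨?_, ?_⟩
        · exact hP
        · rw [hαdef]
          simp only [one_div, inv_inv]
          ring
      have hHolder := Real.inner_le_Lp_mul_Lq_of_nonneg Finset.univ hpq
        (f := p) (g := fun i => q i ^ (-b))
        (fun i _ => (hp i).le) (fun i _ => (rpow_nonneg (hq0 i).le _))
      have hfp : (∑ i, p i ^ α) = S := rfl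
      have hgq : (∑ i, (q i ^ (-b)) ^ (1 / (-b))) = ∑ i, q i := by
        refine Finset.sum_congr rfl fun i _ => ?_
        rw [← Real.rpow_mul (hq0 i).le]
        rw [mul_one_div, div_self (by linarith : (-b) ≠ 0), Real.rpow_one]
      rw [hfp, hgq] at hHolder
      have h1α : 1 / α = 1 + b := by rw [hαdef, one_div_one_div]
      rw [h1α] at hHolder
      have hle1 : (∑ i, q i) ^ (1 / (1 / (-b))) ≤ 1 := by
        rw [one_div_one_div]
        exact Real.rpow_le_one hqsum0 hqs (by linarith)
      have hTle : T ≤ S ^ (1 + b) := by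
        calc T ≤ S ^ (1 + b) * (∑ i, q i) ^ (1 / (1 / (-b))) := hHolder
          _ ≤ S ^ (1 + b) * 1 :=
              mul_le_mul_of_nonneg_left hle1 (rpow_nonneg hS0.le _)
          _ = S ^ (1 + b) := mul_one _
      have hlogle : Real.logb 2 T ≤ (1 + b) * Real.logb 2 S := by
        rw [← Real.logb_rpow_eq_mul_logb_of_pos hS0]
        exact Real.logb_le_logb_of_le (by norm_num) hT0 hTle
      have := mul_le_mul_of_nonpos_left hlogle (by
        have : 1 / b < 0 := by exact one_div_neg.mpr hbneg
        linarith : (1:ℝ) / b ≤ 0)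
      calc (1 + b) / b * Real.logb 2 S
          = 1 / b * ((1 + b) * Real.logb 2 S) := by ring
        _ ≤ 1 / b * Real.logb 2 T := this
    · -- b > 0 : show S ≤ T ^ α
      have hpq : Real.HolderConjugate (1 + b) ((1 + b) / b) := by
        refine Real.holderConjugate_iff.mpr ⟨?_, ?_⟩
        · linarith
        · rw [inv_div]
          field_simp
      have hHolder := Real.inner_le_Lp_mul_Lq_of_nonneg Finset.univ hpq
        (f := fun i => (p i * q i ^ (-b)) ^ α) (g := fun i => q i ^ (1 - α))
        (fun i _ => rpow_nonneg (mul_pos (hp i) (rpow_pos_of_pos (hq0 i) _)).le _)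
        (fun i _ => rpow_nonneg (hq0 i).le _)
      have hbase : ∀ i : Fin n, (0:ℝ) < p i * q i ^ (-b) :=
        fun i => mul_pos (hp i) (rpow_pos_of_pos (hq0 i) _)
      have hfg : (∑ i, (p i * q i ^ (-b)) ^ α * q i ^ (1 - α)) = S := by
        refine Finset.sum_congr rfl fun i _ => ?_
        rw [Real.mul_rpow (hp i).le (rpow_nonneg (hq0 i).le _),
          ← Real.rpow_mul (hq0 i).le, mul_assoc,
          ← Real.rpow_add (hq0 i)]
        have : -b * α + (1 - α) = 0 := by nlinarith [hα1]
        rw [this, Real.rpow_zero, mul_one]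
      have hfP : (∑ i, ((p i * q i ^ (-b)) ^ α) ^ (1 + b)) = T := by
        refine Finset.sum_congr rfl fun i _ => ?_
        rw [← Real.rpow_mul (hbase i).le, hα1, Real.rpow_one]
      have hgQ : (∑ i, (q i ^ (1 - α)) ^ ((1 + b) / b)) = ∑ i, q i := by
        refine Finset.sum_congr rfl fun i _ => ?_
        rw [← Real.rpow_mul (hq0 i).le, h1mα,
          div_mul_div_comm, mul_comm b (1 + b), div_self (ne_of_gt (mul_pos hb1 hbpos)),
          Real.rpow_one]
      rw [hfg, hfP, hgQ] at hHolder
      have hle1 : (∑ i, q i) ^ (1 / ((1 + b) / b)) ≤ 1 :=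
        Real.rpow_le_one hqsum0 hqs (by positivity)
      have hSle : S ≤ T ^ α := by
        calc S ≤ T ^ (1 / (1 + b)) * (∑ i, q i) ^ (1 / ((1 + b) / b)) := hHolder
          _ ≤ T ^ (1 / (1 + b)) * 1 :=
              mul_le_mul_of_nonneg_left hle1 (rpow_nonneg hT0.le _)
          _ = T ^ α := by rw [mul_one, hαdef]
      have hlogle : Real.logb 2 S ≤ α * Real.logb 2 T := by
        rw [← Real.logb_rpow_eq_mul_logb_of_pos hT0]
        exact Real.logb_le_logb_of_le (by norm_num) hS0 hSle
      have hmul := mul_le_mul_of_nonneg_left hlogle (by positivity : (0:ℝ) ≤ (1 + b) / b)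
      have hfin : (1 + b) / b * (α * Real.logb 2 T) = 1 / b * Real.logb 2 T := by
        rw [hαdef]; field_simp
      linarith [hmul, hfin ▸ hmul]
end

section
/- The real-valued lengths l_i† = -(1/(1+b))·log₂ p_i + log₂(Σ_j p_j^(1/(1+b))) achieve F_b(p, l†) = H_{1/(1+b)}(p), i.e., they attain the Rényi entropy lower bound for the β-exponential average. -/
open Real Finset

theorem ideal_lengths_achieve_renyi (n : ℕ) (hn : 1 ≤ n) (p : Fin n → ℝ)
    (hp : ∀ i, 0 < p i) (hsum : ∑ i, p i = 1) (b : ℝ) (hb : -1 < b) (hb0 : b ≠ 0)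
    (l : Fin n → ℝ)
    (hl : ∀ i, l i = -(1 / (1 + b)) * Real.logb 2 (p i)
        + Real.logb 2 (∑ j, p j ^ (1 / (1 + b)))) :
    (1 / b) * Real.logb 2 (∑ i, p i * (2 : ℝ) ^ (b * l i))
      = (1 / (1 - 1 / (1 + b))) * Real.logb 2 (∑ i, p i ^ (1 / (1 + b))) := by
  have h1b : 0 < 1 + b := by linarith
  set α : ℝ := 1 / (1 + b) with hα
  set S : ℝ := ∑ j, p j ^ α with hS
  have hSpos : 0 < S := by
    apply Finset.sum_pos
    · intro i _
      exact Real.rpow_pos_of_pos (hp i) α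
    · exact Finset.univ_nonempty_iff.mpr (Fin.pos_iff_nonempty.mp (by omega))
  have key : ∀ i, p i * (2 : ℝ) ^ (b * l i) = p i ^ α * S ^ b := by
    intro i
    rw [hl i]
    have h2 : (2:ℝ) ^ (b * (-α * Real.logb 2 (p i) + Real.logb 2 S))
        = p i ^ (-(b * α)) * S ^ b := by
      rw [mul_add, Real.rpow_add (by norm_num : (0:ℝ) < 2)]
      congr 1
      · have : b * (-α * Real.logb 2 (p i)) = Real.logb 2 (p i) * (-(b * α)) := by ring
        rw [this, Real.rpow_mul (by norm_num : (0:ℝ) ≤ 2),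
          Real.rpow_logb (by norm_num) (by norm_num) (hp i)]
      · have : b * Real.logb 2 S = Real.logb 2 S * b := by ring
        rw [this, Real.rpow_mul (by norm_num : (0:ℝ) ≤ 2),
          Real.rpow_logb (by norm_num) (by norm_num) hSpos]
    rw [h2, ← mul_assoc]
    congr 1
    have hpi := hp i
    have : p i * p i ^ (-(b * α)) = p i ^ ((1:ℝ) + -(b * α)) := by
      rw [Real.rpow_add hpi, Real.rpow_one]
    rw [this]
    congr 1
    rw [hα]; field_simp; ring
  have hsum2 : (∑ i, p i * (2 : ℝ) ^ (b * l i)) = S ^ (1 + b) := by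
    rw [Finset.sum_congr rfl (fun i _ => key i), ← Finset.sum_mul, ← hS]
    have : S * S ^ b = S ^ ((1:ℝ) + b) := by
      rw [Real.rpow_add hSpos, Real.rpow_one]
    rw [this]
  rw [hsum2]
  have hlog : Real.logb 2 (S ^ (1 + b)) = (1 + b) * Real.logb 2 S := by
    unfold Real.logb
    rw [Real.log_rpow hSpos]
    ring
  rw [hlog]
  have h1mα : 1 - α = b / (1 + b) := by
    rw [hα]; field_simp; ring
  rw [h1mα]
  field_simp
end

section
/- For any probability mass function p with p_i > 0 for all i and any real b ≠ 0 with b > -1, and any real-valued lengths l satisfying the Kraft inequality Σ 2^(-l_i) ≤ 1, one has F_b(p,l) ≥ H_{1/(1+b)}(p), i.e., (1/b)·log₂(Σ_i p_i·2^(b·l_i)) ≥ (1+b)/b · log₂(Σ_i p_i^(1/(1+b))). -/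
open Real Finset

theorem exp_average_ge_renyi (n : ℕ) (hn : 1 ≤ n) (p : Fin n → ℝ)
    (hp : ∀ i, 0 < p i) (hsum : ∑ i, p i = 1) (b : ℝ) (hb : -1 < b) (hb0 : b ≠ 0)
    (l : Fin n → ℝ) (hkraft : ∑ i, (2 : ℝ) ^ (-(l i)) ≤ 1) :
    (1 / b) * Real.logb 2 (∑ i, p i * (2 : ℝ) ^ (b * l i))
      ≥ ((1 + b) / b) * Real.logb 2 (∑ i, p i ^ (1 / (1 + b))) := by
  have hne : Nonempty (Fin n) := Fin.pos_iff_nonempty.mp hn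
  have h1b : (0 : ℝ) < 1 + b := by linarith
  have h1b' : (1 : ℝ) + b ≠ 0 := ne_of_gt h1b
  set S := ∑ i, p i * (2 : ℝ) ^ (b * l i) with hS
  set T := ∑ i, p i ^ (1 / (1 + b)) with hT
  have hSpos : 0 < S := by
    apply Finset.sum_pos (fun i _ => ?_) Finset.univ_nonempty
    have := hp i
    positivity
  have hTpos : 0 < T := by
    apply Finset.sum_pos (fun i _ => ?_) Finset.univ_nonempty
    have := hp i
    positivity
  have hK0 : (0 : ℝ) ≤ ∑ i, (2 : ℝ) ^ (-(l i)) := by positivity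
  -- key inequality in each case
  have key : (b > 0 ∧ T ^ (1 + b) ≤ S) ∨ (b < 0 ∧ S ≤ T ^ (1 + b)) := by
    rcases lt_or_gt_of_ne hb0 with hbneg | hbpos
    · -- b < 0 : Hölder with exponents 1/(1+b) and -1/b
      right
      refine ⟨hbneg, ?_⟩
      have hconj : Real.HolderConjugate (1 / (1 + b)) (-1 / b) := by
        rw [Real.holderConjugate_iff]; constructor
        · rw [lt_div_iff₀ h1b]; linarith
        · field_simp; ring
      have hhold := Real.inner_le_Lp_mul_Lq_of_nonneg (s := Finset.univ)
        (f := fun i => p i) (g := fun i => (2 : ℝ) ^ (b * l i)) hconj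
        (fun i _ => (hp i).le) (fun i _ => by positivity)
      have e1 : ∀ i, (p i) ^ (1 / (1 + b)) = p i ^ (1 / (1 + b)) := fun i => rfl
      have e2 : ∀ i, ((2 : ℝ) ^ (b * l i)) ^ (-1 / b) = (2 : ℝ) ^ (-(l i)) := by
        intro i
        rw [← Real.rpow_mul (by norm_num : (0:ℝ) ≤ 2)]
        congr 1
        field_simp
      rw [Finset.sum_congr rfl (fun i _ => e2 i)] at hhold
      have hexp : 1 / (1 / (1 + b)) = 1 + b := by field_simp
      rw [hexp] at hhold
      calc S ≤ T ^ (1 + b) * (∑ i, (2 : ℝ) ^ (-(l i))) ^ (1 / (-1 / b)) := hhold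
        _ ≤ T ^ (1 + b) * 1 := by
            apply mul_le_mul_of_nonneg_left _ (by positivity)
            apply Real.rpow_le_one hK0 hkraft
            have : 1 / (-1 / b) = -b := by field_simp
            rw [this]; linarith
        _ = T ^ (1 + b) := mul_one _
    · -- b > 0 : Hölder with exponents 1+b and (1+b)/b
      left
      refine ⟨hbpos, ?_⟩
      have hconj : Real.HolderConjugate (1 + b) ((1 + b) / b) := by
        rw [Real.holderConjugate_iff]; constructor
        · linarith
        · field_simp
      have hhold := Real.inner_le_Lp_mul_Lq_of_nonneg (s := Finset.univ)
        (f := fun i => (p i * (2 : ℝ) ^ (b * l i)) ^ (1 / (1 + b)))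
        (g := fun i => ((2 : ℝ) ^ (-(l i))) ^ (b / (1 + b))) hconj
        (fun i _ => by have := hp i; positivity) (fun i _ => by positivity)
      have e1 : ∀ i, ((p i * (2 : ℝ) ^ (b * l i)) ^ (1 / (1 + b))) *
          ((2 : ℝ) ^ (-(l i))) ^ (b / (1 + b)) = p i ^ (1 / (1 + b)) := by
        intro i
        have hpi := (hp i).le
        rw [Real.mul_rpow hpi (by positivity),
          ← Real.rpow_mul (by norm_num : (0:ℝ) ≤ 2), ← Real.rpow_mul (by norm_num : (0:ℝ) ≤ 2),
          mul_assoc, ← Real.rpow_add (by norm_num : (0:ℝ) < 2)]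
        have : b * l i * (1 / (1 + b)) + -l i * (b / (1 + b)) = 0 := by field_simp; ring
        rw [this, Real.rpow_zero, mul_one]
      have e2 : ∀ i, ((p i * (2 : ℝ) ^ (b * l i)) ^ (1 / (1 + b))) ^ (1 + b)
          = p i * (2 : ℝ) ^ (b * l i) := by
        intro i
        rw [← Real.rpow_mul (by have := hp i; positivity), one_div,
          inv_mul_cancel₀ h1b', Real.rpow_one]
      have e3 : ∀ i, (((2 : ℝ) ^ (-(l i))) ^ (b / (1 + b))) ^ ((1 + b) / b)
          = (2 : ℝ) ^ (-(l i)) := by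
        intro i
        rw [← Real.rpow_mul (by positivity)]
        rw [div_mul_div_comm, mul_comm b, div_self (by positivity), Real.rpow_one]
      rw [Finset.sum_congr rfl (fun i _ => e1 i),
        Finset.sum_congr rfl (fun i _ => e2 i),
        Finset.sum_congr rfl (fun i _ => e3 i)] at hhold
      have hT' : T ≤ S ^ (1 / (1 + b)) := by
        calc T ≤ S ^ (1 / (1 + b)) * (∑ i, (2 : ℝ) ^ (-(l i))) ^ (1 / ((1 + b) / b)) := hhold
          _ ≤ S ^ (1 / (1 + b)) * 1 := by
              apply mul_le_mul_of_nonneg_left _ (by positivity)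
              apply Real.rpow_le_one hK0 hkraft
              positivity
          _ = S ^ (1 / (1 + b)) := mul_one _
      calc T ^ (1 + b) ≤ (S ^ (1 / (1 + b))) ^ (1 + b) :=
            Real.rpow_le_rpow hTpos.le hT' h1b.le
        _ = S := by
            rw [← Real.rpow_mul hSpos.le, one_div, inv_mul_cancel₀ h1b', Real.rpow_one]
  -- conclude
  have hlogT : Real.logb 2 (T ^ (1 + b)) = (1 + b) * Real.logb 2 T := by
    rw [Real.logb, Real.logb, Real.log_rpow hTpos, mul_div_assoc]
  rcases key with ⟨hbpos, hkey⟩ | ⟨hbneg, hkey⟩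
  · have hlog : (1 + b) * Real.logb 2 T ≤ Real.logb 2 S := by
      rw [← hlogT]
      exact Real.logb_le_logb_of_le (by norm_num) (by positivity) hkey
    have h2 : ((1 + b) / b) * Real.logb 2 T = (1 / b) * ((1 + b) * Real.logb 2 T) := by ring
    rw [ge_iff_le, h2]
    exact mul_le_mul_of_nonneg_left hlog (by positivity)
  · have hlog : Real.logb 2 S ≤ (1 + b) * Real.logb 2 T := by
      rw [← hlogT]
      exact Real.logb_le_logb_of_le (by norm_num) hSpos hkey
    have h2 : ((1 + b) / b) * Real.logb 2 T = (1 / b) * ((1 + b) * Real.logb 2 T) := by ring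
    rw [ge_iff_le, h2]
    exact mul_le_mul_of_nonpos_left hlog (le_of_lt (div_neg_of_pos_of_neg one_pos hbneg))
end

section
/- As d → +∞, for a fixed length vector l, (1/d)·log₂(Σ_i p_i·2^(d·r_b(i))) = max_i r_b(i) + (1/d)·log₂(P[r_b(X) = max_j r_b(j)]) + O(1/(d·2^(d·δ))) for some δ > 0, where P is the probability under p of the set of indices attaining the maximum pointwise b-redundancy. In particular, the limit as d → +∞ equals max_i r_b(i). -/
open Real Finset Filter Asymptotics

theorem exp_average_expansion_at_infinity (n : ℕ) (hn : 1 ≤ n) (p : Fin n → ℝ)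
    (hp : ∀ i, 0 < p i) (hsum : ∑ i, p i = 1) (b : ℝ) (hb : -1 < b)
    (l : Fin n → ℝ) (r : Fin n → ℝ)
    (hr : ∀ i, r i = l i - (-(1 / (1 + b)) * Real.logb 2 (p i)
        + Real.logb 2 (∑ j, p j ^ (1 / (1 + b)))))
    (M : ℝ) (hM : M = (Finset.univ.sup' (Finset.univ_nonempty_iff.2 ⟨⟨0, hn⟩⟩) r))
    (P : ℝ) (hP : P = ∑ i ∈ Finset.univ.filter (fun i => r i = M), p i) :
    (∃ δ > (0 : ℝ),
      (fun d : ℝ =>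
          (1 / d) * Real.logb 2 (∑ i, p i * (2 : ℝ) ^ (d * r i))
            - (M + (1 / d) * Real.logb 2 P))
        =O[Filter.atTop] (fun d : ℝ => 1 / (d * (2 : ℝ) ^ (d * δ)))) ∧
    Filter.Tendsto
      (fun d : ℝ => (1 / d) * Real.logb 2 (∑ i, p i * (2 : ℝ) ^ (d * r i)))
      Filter.atTop (nhds M) := by
  have h2 : (1:ℝ) < 2 := one_lt_two
  have hlog2 : 0 < Real.log 2 := Real.log_pos h2
  obtain ⟨i₀, -, hi₀⟩ := Finset.exists_mem_eq_sup'
    (Finset.univ_nonempty_iff.2 ⟨⟨0, hn⟩⟩) r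
  have hMle : ∀ i, r i ≤ M := fun i => hM ▸ Finset.le_sup' r (Finset.mem_univ i)
  have hPpos : 0 < P := by
    rw [hP]
    refine Finset.sum_pos (fun i _ => hp i) ⟨i₀, ?_⟩
    simp [hM, hi₀.symm]
  set B : Finset (Fin n) := Finset.univ.filter (fun i => ¬ (r i = M)) with hB
  set δ : ℝ := if h : B.Nonempty then M - B.sup' h r else 1 with hδdef
  have hδpos : 0 < δ := by
    rw [hδdef]
    split_ifs with h
    · obtain ⟨j, hj, hjeq⟩ := Finset.exists_mem_eq_sup' h r
      have hne : r j ≠ M := by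
        have := (Finset.mem_filter.1 (hB ▸ hj)).2
        simpa using this
      have hlt := lt_of_le_of_ne (hMle j) hne
      rw [hjeq]
      linarith
    · norm_num
  have hgap : ∀ i ∈ B, r i ≤ M - δ := by
    intro i hi
    have hne : B.Nonempty := ⟨i, hi⟩
    rw [hδdef, dif_pos hne]
    have := Finset.le_sup' r hi
    linarith
  set E : ℝ → ℝ := fun d => ∑ i ∈ B, p i * (2:ℝ) ^ (d * (r i - M)) with hE
  have hEnonneg : ∀ d, 0 ≤ E d := fun d =>
    Finset.sum_nonneg fun i _ => mul_nonneg (hp i).le (Real.rpow_nonneg (by norm_num) _)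
  have hEbound : ∀ d : ℝ, 0 ≤ d → E d ≤ (2:ℝ) ^ (-(d * δ)) := by
    intro d hd
    calc E d ≤ ∑ i ∈ B, p i * (2:ℝ) ^ (-(d * δ)) := by
          refine Finset.sum_le_sum fun i hi => ?_
          refine mul_le_mul_of_nonneg_left ?_ (hp i).le
          apply Real.rpow_le_rpow_of_exponent_le (by norm_num)
          have := hgap i hi
          nlinarith
      _ = (∑ i ∈ B, p i) * (2:ℝ) ^ (-(d * δ)) := by rw [Finset.sum_mul]
      _ ≤ 1 * (2:ℝ) ^ (-(d * δ)) := by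
          refine mul_le_mul_of_nonneg_right ?_ (Real.rpow_nonneg (by norm_num) _)
          calc (∑ i ∈ B, p i) ≤ ∑ i, p i := by
                rw [hB]
                exact Finset.sum_le_sum_of_subset_of_nonneg (Finset.filter_subset _ _)
                  (fun i _ _ => (hp i).le)
            _ = 1 := hsum
      _ = _ := one_mul _
  have hSid : ∀ d : ℝ, (∑ i, p i * (2:ℝ) ^ (d * r i)) = (2:ℝ)^(d*M) * (P + E d) := by
    intro d
    rw [mul_add, hP, hE]
    rw [← Finset.sum_filter_add_sum_filter_not Finset.univ (fun i => r i = M)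
      (fun i => p i * (2:ℝ)^(d * r i))]
    rw [← hB]
    congr 1
    · rw [Finset.mul_sum]
      refine Finset.sum_congr rfl fun i hi => ?_
      rw [(Finset.mem_filter.1 hi).2]
      ring
    · rw [Finset.mul_sum]
      refine Finset.sum_congr rfl fun i hi => ?_
      have hexp : d * r i = d * M + d * (r i - M) := by ring
      rw [hexp, Real.rpow_add two_pos]
      ring
  have key : ∀ d : ℝ, 1 ≤ d →
      0 ≤ (1 / d) * Real.logb 2 (∑ i, p i * (2:ℝ) ^ (d * r i))
          - (M + (1 / d) * Real.logb 2 P) ∧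
      (1 / d) * Real.logb 2 (∑ i, p i * (2:ℝ) ^ (d * r i))
          - (M + (1 / d) * Real.logb 2 P)
        ≤ (1 / (P * Real.log 2)) * (1 / (d * (2:ℝ) ^ (d * δ))) := by
    intro d hd
    have hd0 : 0 < d := lt_of_lt_of_le one_pos hd
    have hPE : 0 < P + E d := by linarith [hEnonneg d]
    have hlogbS : Real.logb 2 (∑ i, p i * (2:ℝ) ^ (d * r i))
        = d * M + Real.logb 2 (P + E d) := by
      rw [hSid d, Real.logb_mul (ne_of_gt (Real.rpow_pos_of_pos two_pos _)) (ne_of_gt hPE),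
        Real.logb_rpow two_pos (by norm_num)]
    have hfd : (1 / d) * Real.logb 2 (∑ i, p i * (2:ℝ) ^ (d * r i))
        - (M + (1 / d) * Real.logb 2 P)
        = (1/d) * (Real.logb 2 (P + E d) - Real.logb 2 P) := by
      rw [hlogbS]
      field_simp
      ring
    have hdiff : Real.logb 2 (P + E d) - Real.logb 2 P
        = Real.log ((P + E d) / P) / Real.log 2 := by
      rw [Real.logb, Real.logb, div_sub_div_same, Real.log_div (ne_of_gt hPE) (ne_of_gt hPpos)]
    have hx1 : 1 ≤ (P + E d) / P := by
      rw [le_div_iff₀ hPpos]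
      linarith [hEnonneg d]
    have hlog_nonneg : 0 ≤ Real.log ((P + E d) / P) := Real.log_nonneg hx1
    have hlog_le : Real.log ((P + E d) / P) ≤ E d / P := by
      have := Real.log_le_sub_one_of_pos (lt_of_lt_of_le one_pos hx1)
      have heq : (P + E d) / P - 1 = E d / P := by field_simp; ring
      linarith
    constructor
    · rw [hfd, hdiff]
      positivity
    · rw [hfd, hdiff]
      have hEb := hEbound d hd0.le
      have hrw : (2:ℝ) ^ (-(d * δ)) = ((2:ℝ) ^ (d * δ))⁻¹ := Real.rpow_neg (by norm_num) _
      have hpow : 0 < (2:ℝ) ^ (d * δ) := Real.rpow_pos_of_pos two_pos _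
      rw [hrw] at hEb
      have step : Real.log ((P + E d) / P) / Real.log 2 ≤ ((2:ℝ)^(d*δ))⁻¹ / (P * Real.log 2) := by
        rw [div_le_div_iff₀ hlog2 (by positivity)]
        calc Real.log ((P + E d) / P) * (P * Real.log 2)
            ≤ (E d / P) * (P * Real.log 2) := by
              apply mul_le_mul_of_nonneg_right hlog_le (by positivity)
          _ = E d * Real.log 2 := by field_simp
          _ ≤ ((2:ℝ)^(d*δ))⁻¹ * Real.log 2 := by
              apply mul_le_mul_of_nonneg_right hEb hlog2.le
      calc (1/d) * (Real.log ((P + E d) / P) / Real.log 2)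
          ≤ (1/d) * (((2:ℝ)^(d*δ))⁻¹ / (P * Real.log 2)) := by
            apply mul_le_mul_of_nonneg_left step (by positivity)
        _ = (1 / (P * Real.log 2)) * (1 / (d * (2:ℝ) ^ (d * δ))) := by
            field_simp
  have hg0 : Filter.Tendsto (fun d : ℝ => 1 / (d * (2:ℝ) ^ (d * δ))) Filter.atTop (nhds 0) := by
    simp only [one_div]
    apply Filter.Tendsto.inv_tendsto_atTop
    apply Filter.Tendsto.atTop_mul_atTop₀ tendsto_id
    have h1 : Filter.Tendsto (fun d : ℝ => d * δ) Filter.atTop Filter.atTop :=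
      Filter.Tendsto.atTop_mul_const hδpos tendsto_id
    have h2' : Filter.Tendsto (fun y : ℝ => (2:ℝ) ^ y) Filter.atTop Filter.atTop := by
      have : ∀ y : ℝ, (2:ℝ) ^ y = Real.exp (Real.log 2 * y) := fun y => by
        rw [Real.rpow_def_of_pos two_pos]
      simp only [this]
      exact Real.tendsto_exp_atTop.comp (Filter.tendsto_id.const_mul_atTop hlog2)
    exact h2'.comp h1
  constructor
  · refine ⟨δ, hδpos, ?_⟩
    rw [isBigO_iff]
    refine ⟨1 / (P * Real.log 2), ?_⟩
    filter_upwards [eventually_ge_atTop (1:ℝ)] with d hd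
    obtain ⟨h1, h2⟩ := key d hd
    have hd0 : 0 < d := lt_of_lt_of_le one_pos hd
    have hgpos : 0 < 1 / (d * (2:ℝ)^(d*δ)) := by positivity
    rw [Real.norm_of_nonneg h1, Real.norm_of_nonneg hgpos.le]
    exact h2
  · have hf0 : Filter.Tendsto (fun d : ℝ =>
        (1 / d) * Real.logb 2 (∑ i, p i * (2:ℝ) ^ (d * r i))
          - (M + (1 / d) * Real.logb 2 P)) Filter.atTop (nhds 0) := by
      apply tendsto_of_tendsto_of_tendsto_of_le_of_le' tendsto_const_nhds
        (by have := hg0.const_mul (1 / (P * Real.log 2)); rwa [mul_zero] at this)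
      · filter_upwards [eventually_ge_atTop (1:ℝ)] with d hd
        exact (key d hd).1
      · filter_upwards [eventually_ge_atTop (1:ℝ)] with d hd
        exact (key d hd).2
    have hP0 : Filter.Tendsto (fun d : ℝ => (1/d) * Real.logb 2 P) Filter.atTop (nhds 0) := by
      have := (tendsto_inv_atTop_zero (𝕜 := ℝ)).mul_const (Real.logb 2 P)
      simpa [one_div] using this
    have hsumT := (hf0.add (tendsto_const_nhds (x := M))).add hP0
    have heq : (fun d : ℝ => (1/d) * Real.logb 2 (∑ i, p i * (2:ℝ)^(d * r i)))
        = fun d : ℝ => ((1 / d) * Real.logb 2 (∑ i, p i * (2:ℝ) ^ (d * r i))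
          - (M + (1 / d) * Real.logb 2 P) + M) + (1/d) * Real.logb 2 P := by
      funext d; ring
    rw [heq]
    simpa using hsumT
end

section
/- Shannon-type bounds for DABR: for b > -1, d > -1, d ≠ 0, b+d ≥ -1, the optimal integer-length d-average b-redundancy satisfies 0 ≤ R_{b,d}(p, l*) − α·b·(H_ω(p) − H_α(p)) < 1, where α = 1/(1+b), ω = (1+b+d)/((1+b)(1+d)), H_s(p) = (1/(1-s))·log₂(Σ_i p_i^s), R_{b,d}(p,l) = (1/d)·log₂(Σ_i p_i·2^(d(l_i − l_i†))), l_i† = -(1/(1+b))·log₂ p_i + log₂(Σ_j p_j^(1/(1+b))), and l* minimizes R_{b,d}(p,·) over integer length vectors satisfying the Kraft inequality. The upper bound is witnessed by the rounded lengths ⌈l_i‡⌉. -/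
open Real Finset

lemma two_rpow_mul_logb (c x : ℝ) (hx : 0 < x) :
    (2:ℝ) ^ (c * Real.logb 2 x) = x ^ c := by
  rw [mul_comm, Real.rpow_mul (by norm_num), Real.rpow_logb (by norm_num) (by norm_num) hx]

lemma exp_jensen {n : ℕ} (q x : Fin n → ℝ) (hq : ∀ i, 0 ≤ q i)
    (hq1 : ∑ i, q i = 1) :
    (2:ℝ) ^ (∑ i, q i * x i) ≤ ∑ i, q i * (2:ℝ) ^ (x i) := by
  have h := convexOn_exp.map_sum_le (t := Finset.univ) (w := q)
      (p := fun i => Real.log 2 * x i) (fun i _ => hq i) hq1 (fun i _ => Set.mem_univ _)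
  simp only [smul_eq_mul] at h
  have e1 : (2:ℝ) ^ (∑ i, q i * x i) = Real.exp (∑ i, q i * (Real.log 2 * x i)) := by
    rw [Real.rpow_def_of_pos (by norm_num)]
    congr 1
    rw [Finset.mul_sum]
    exact Finset.sum_congr rfl fun i _ => by ring
  have e2 : ∀ i : Fin n, Real.exp (Real.log 2 * x i) = (2:ℝ) ^ (x i) := fun i => by
    rw [Real.rpow_def_of_pos (by norm_num)]
  rw [e1]
  refine h.trans_eq ?_
  exact Finset.sum_congr rfl fun i _ => by rw [e2]

lemma rpow_jensen_concave {n : ℕ} (q x : Fin n → ℝ) (hq : ∀ i, 0 ≤ q i)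
    (hq1 : ∑ i, q i = 1) (hx : ∀ i, 0 ≤ x i) {s : ℝ} (hs0 : 0 < s) (hs1 : s ≤ 1) :
    ∑ i, q i * (x i) ^ s ≤ (∑ i, q i * x i) ^ s := by
  have hp : (1:ℝ) ≤ 1 / s := (le_div_iff₀ hs0).2 (by linarith)
  have h := Real.arith_mean_le_rpow_mean Finset.univ q (fun i => (x i) ^ s)
      (fun i _ => hq i) hq1 (fun i _ => Real.rpow_nonneg (hx i) s) hp
  have e : ∀ i : Fin n, ((x i) ^ s) ^ (1/s) = x i := fun i => by
    rw [← Real.rpow_mul (hx i), mul_one_div_cancel hs0.ne', Real.rpow_one]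
  simp only [e, one_div_one_div] at h
  exact h

theorem dabr_shannon_bounds (n : ℕ) (hn : 1 ≤ n) (p : Fin n → ℝ)
    (hp : ∀ i, 0 < p i) (hsum : ∑ i, p i = 1)
    (b d : ℝ) (hb : -1 < b) (hd : -1 < d) (hd0 : d ≠ 0) (hb0 : b ≠ 0)
    (hbd : -1 ≤ b + d)
    (α ω : ℝ) (hα : α = 1 / (1 + b)) (hω : ω = (1 + b + d) / ((1 + b) * (1 + d)))
    (ldag : Fin n → ℝ)
    (hldag : ∀ i, ldag i = -(1 / (1 + b)) * Real.logb 2 (p i)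
        + Real.logb 2 (∑ j, p j ^ (1 / (1 + b))))
    (R : (Fin n → ℤ) → ℝ)
    (hR : ∀ l, R l = (1 / d) * Real.logb 2 (∑ i, p i * (2 : ℝ) ^ (d * ((l i : ℝ) - ldag i))))
    (Hω Hα : ℝ)
    (hHω : Hω = (1 / (1 - ω)) * Real.logb 2 (∑ i, p i ^ ω))
    (hHα : Hα = (1 / (1 - α)) * Real.logb 2 (∑ i, p i ^ α))
    (lstar : Fin n → ℤ) (hkraft : ∑ i, (2 : ℝ) ^ (-((lstar i : ℝ))) ≤ 1)
    (hopt : ∀ l : Fin n → ℤ, (∑ i, (2 : ℝ) ^ (-((l i : ℝ))) ≤ 1) → R lstar ≤ R l) :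
    0 ≤ R lstar - α * b * (Hω - Hα) ∧ R lstar - α * b * (Hω - Hα) < 1 := by
  have h1b : (0:ℝ) < 1 + b := by linarith
  have h1d : (0:ℝ) < 1 + d := by linarith
  have hn' : Nonempty (Fin n) := Fin.pos_iff_nonempty.1 hn
  set A : ℝ := ∑ j, p j ^ ω with hA_def
  set B : ℝ := ∑ j, p j ^ α with hB_def
  have hApos : 0 < A :=
    Finset.sum_pos (fun i _ => Real.rpow_pos_of_pos (hp i) _) Finset.univ_nonempty
  have hBpos : 0 < B :=
    Finset.sum_pos (fun i _ => Real.rpow_pos_of_pos (hp i) _) Finset.univ_nonempty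
  set q : Fin n → ℝ := fun i => p i ^ ω / A with hq_def
  have hqpos : ∀ i, 0 < q i := fun i => div_pos (Real.rpow_pos_of_pos (hp i) _) hApos
  have hqsum : ∑ i, q i = 1 := by
    simp only [hq_def]
    rw [← Finset.sum_div, ← hA_def, div_self hApos.ne']
  set lsharp : Fin n → ℝ := fun i => -ω * Real.logb 2 (p i) + Real.logb 2 A with hlsharp
  have h2ls : ∀ i, (2:ℝ) ^ (-(lsharp i)) = q i := by
    intro i
    have e : -(lsharp i) = ω * Real.logb 2 (p i) - Real.logb 2 A := by
      simp only [hlsharp]; ring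
    rw [e, Real.rpow_sub two_pos, two_rpow_mul_logb _ _ (hp i),
      Real.rpow_logb two_pos (by norm_num) hApos]
  have hexp : 1 + d * (α - ω) = ω := by
    subst hα hω
    field_simp
    ring
  have hldag' : ∀ i, ldag i = -α * Real.logb 2 (p i) + Real.logb 2 B := by
    intro i
    rw [hldag i, hB_def, hα]
  have key : ∀ (i : Fin n) (x : ℝ), p i * (2:ℝ) ^ (d * (x - ldag i))
      = A ^ (1+d) * B ^ (-d) * (q i * (2:ℝ) ^ (d * (x - lsharp i))) := by
    intro i x
    have e0 : d * (x - ldag i) = d * (x - lsharp i)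
        + ((d*(α-ω)) * Real.logb 2 (p i) + (d * Real.logb 2 A + (-d) * Real.logb 2 B)) := by
      rw [hldag' i]; simp only [hlsharp]; ring
    rw [e0, Real.rpow_add two_pos, Real.rpow_add two_pos, Real.rpow_add two_pos,
      two_rpow_mul_logb _ _ (hp i), two_rpow_mul_logb _ _ hApos, two_rpow_mul_logb _ _ hBpos]
    have hpω : p i * p i ^ (d*(α-ω)) = p i ^ ω := by
      nth_rewrite 1 [← Real.rpow_one (p i)]
      rw [← Real.rpow_add (hp i), hexp]
    have hA1d : A ^ ((1:ℝ)+d) = A * A ^ d := by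
      rw [Real.rpow_add hApos, Real.rpow_one]
    simp only [hq_def]
    rw [hA1d, ← hpω]
    field_simp
  set S : (Fin n → ℤ) → ℝ := fun l => ∑ i, q i * (2:ℝ) ^ (d * ((l i : ℝ) - lsharp i))
    with hS_def
  have hSpos : ∀ l, 0 < S l := fun l =>
    Finset.sum_pos (fun i _ => mul_pos (hqpos i) (Real.rpow_pos_of_pos two_pos _))
      Finset.univ_nonempty
  have hSsum : ∀ l : Fin n → ℤ, ∑ i, p i * (2:ℝ) ^ (d * ((l i : ℝ) - ldag i))
      = A ^ (1+d) * B ^ (-d) * S l := by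
    intro l
    simp only [hS_def]
    rw [Finset.mul_sum]
    exact Finset.sum_congr rfl fun i _ => key i _
  have hRS : ∀ l : Fin n → ℤ, R l
      = (((1+d)/d) * Real.logb 2 A - Real.logb 2 B) + (1/d) * Real.logb 2 (S l) := by
    intro l
    rw [hR l, hSsum l,
      Real.logb_mul (mul_ne_zero (Real.rpow_pos_of_pos hApos _).ne'
        (Real.rpow_pos_of_pos hBpos _).ne') (hSpos l).ne',
      Real.logb_mul (Real.rpow_pos_of_pos hApos _).ne' (Real.rpow_pos_of_pos hBpos _).ne',
      Real.logb_rpow_eq_mul_logb_of_pos hApos, Real.logb_rpow_eq_mul_logb_of_pos hBpos]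
    field_simp
    ring
  have hC : ((1+d)/d) * Real.logb 2 A - Real.logb 2 B = α * b * (Hω - Hα) := by
    rw [hHω, hHα]
    have hω1 : 1 - ω = b*d/((1+b)*(1+d)) := by rw [hω]; field_simp; ring
    have hα1 : 1 - α = b/(1+b) := by rw [hα]; field_simp; ring
    rw [hω1, hα1, hα]
    field_simp
  have hgap : ∀ l : Fin n → ℤ, R l - α * b * (Hω - Hα) = (1/d) * Real.logb 2 (S l) := by
    intro l
    rw [hRS l, ← hC]
    ring
  have hkraftq : ∀ l : Fin n → ℤ, (∑ i, (2:ℝ) ^ (-((l i : ℝ))))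
      = ∑ i, q i * (2:ℝ) ^ (-(((l i : ℝ)) - lsharp i)) := by
    intro l
    refine Finset.sum_congr rfl fun i _ => ?_
    have e : -((l i : ℝ)) = -(lsharp i) + (-(((l i : ℝ)) - lsharp i)) := by ring
    rw [e, Real.rpow_add two_pos, h2ls i]
  -- Lower bound
  have hlow : ∀ l : Fin n → ℤ, (∑ i, (2:ℝ) ^ (-((l i : ℝ))) ≤ 1) →
      0 ≤ (1/d) * Real.logb 2 (S l) := by
    intro l hl
    rw [hkraftq l] at hl
    rcases lt_or_gt_of_ne hd0 with hdneg | hdpos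
    · -- d < 0 : S l ≤ 1
      have e : ∀ i : Fin n, (2:ℝ) ^ (d * ((l i : ℝ) - lsharp i))
          = ((2:ℝ) ^ (-(((l i : ℝ)) - lsharp i))) ^ (-d) := by
        intro i
        rw [← Real.rpow_mul (le_of_lt two_pos)]
        congr 1; ring
      have hS1 : S l ≤ 1 := by
        calc S l = ∑ i, q i * ((2:ℝ) ^ (-(((l i : ℝ)) - lsharp i))) ^ (-d) := by
              simp only [hS_def]
              exact Finset.sum_congr rfl fun i _ => by rw [e i]
          _ ≤ (∑ i, q i * (2:ℝ) ^ (-(((l i : ℝ)) - lsharp i))) ^ (-d) :=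
              rpow_jensen_concave q _ (fun i => (hqpos i).le) hqsum
                (fun i => (Real.rpow_pos_of_pos two_pos _).le) (by linarith) (by linarith)
          _ ≤ 1 := Real.rpow_le_one
              (Finset.sum_nonneg fun i _ =>
                mul_nonneg (hqpos i).le (Real.rpow_pos_of_pos two_pos _).le)
              hl (by linarith)
      have hlog : Real.logb 2 (S l) ≤ 0 := Real.logb_nonpos one_lt_two (hSpos l).le hS1
      have h1d' : 1/d ≤ 0 := (one_div_neg.2 hdneg).le
      have := mul_nonneg (neg_nonneg.2 h1d') (neg_nonneg.2 hlog)
      nlinarith [this]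
    · -- d > 0
      have hm : 0 ≤ ∑ i, q i * ((l i : ℝ) - lsharp i) := by
        have j := exp_jensen q (fun i => -((l i : ℝ) - lsharp i))
          (fun i => (hqpos i).le) hqsum
        have h2 : (2:ℝ) ^ (∑ i, q i * -((l i : ℝ) - lsharp i)) ≤ 1 := j.trans hl
        have h2' : (2:ℝ) ^ (∑ i, q i * -((l i : ℝ) - lsharp i)) ≤ (2:ℝ) ^ (0:ℝ) := by
          rw [Real.rpow_zero]; exact h2
        have h3 : ∑ i, q i * -((l i : ℝ) - lsharp i) ≤ 0 :=
          (Real.rpow_le_rpow_left_iff (x := 2) one_lt_two).1 h2'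
        have e : ∑ i, q i * -((l i : ℝ) - lsharp i)
            = -∑ i, q i * ((l i : ℝ) - lsharp i) := by
          rw [← Finset.sum_neg_distrib]
          exact Finset.sum_congr rfl fun i _ => by ring
        rw [e] at h3
        linarith
      have hS1 : 1 ≤ S l := by
        have j := exp_jensen q (fun i => d * ((l i : ℝ) - lsharp i))
          (fun i => (hqpos i).le) hqsum
        have e : ∑ i, q i * (d * ((l i : ℝ) - lsharp i))
            = d * ∑ i, q i * ((l i : ℝ) - lsharp i) := by
          rw [Finset.mul_sum]
          exact Finset.sum_congr rfl fun i _ => by ring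
        have h0 : (1:ℝ) ≤ (2:ℝ) ^ (∑ i, q i * (d * ((l i : ℝ) - lsharp i))) := by
          rw [e]
          calc (1:ℝ) = (2:ℝ) ^ (0:ℝ) := by norm_num
            _ ≤ _ := Real.rpow_le_rpow_of_exponent_le one_le_two
                (mul_nonneg hdpos.le hm)
        exact h0.trans j
      have hlog : 0 ≤ Real.logb 2 (S l) := Real.logb_nonneg one_lt_two hS1
      positivity
  -- Upper bound: rounded lengths
  set lc : Fin n → ℤ := fun i => ⌈lsharp i⌉ with hlc
  have htlo : ∀ i, 0 ≤ (lc i : ℝ) - lsharp i := by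
    intro i
    simp only [hlc]
    have := Int.le_ceil (lsharp i)
    linarith
  have hthi : ∀ i, (lc i : ℝ) - lsharp i < 1 := by
    intro i
    simp only [hlc]
    have := Int.ceil_lt_add_one (lsharp i)
    linarith
  have hkc : ∑ i, (2:ℝ) ^ (-((lc i : ℝ))) ≤ 1 := by
    rw [hkraftq lc]
    calc ∑ i, q i * (2:ℝ) ^ (-(((lc i : ℝ)) - lsharp i))
        ≤ ∑ i, q i * 1 := Finset.sum_le_sum fun i _ =>
          mul_le_mul_of_nonneg_left
            (Real.rpow_le_one_of_one_le_of_nonpos one_le_two (by linarith [htlo i]))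
            (hqpos i).le
      _ = 1 := by simp only [mul_one]; exact hqsum
  have hup : (1/d) * Real.logb 2 (S lc) < 1 := by
    rcases lt_or_gt_of_ne hd0 with hdneg | hdpos
    · -- d < 0 : 2^d < S lc
      have hSgt : (2:ℝ) ^ d < S lc := by
        have : ∑ i, q i * (2:ℝ) ^ d < S lc := by
          simp only [hS_def]
          refine Finset.sum_lt_sum_of_nonempty Finset.univ_nonempty fun i _ => ?_
          refine mul_lt_mul_of_pos_left ?_ (hqpos i)
          refine (Real.rpow_lt_rpow_left_iff one_lt_two).2 ?_
          nlinarith [hthi i]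
        calc (2:ℝ) ^ d = (∑ i, q i) * (2:ℝ) ^ d := by rw [hqsum, one_mul]
          _ = ∑ i, q i * (2:ℝ) ^ d := by rw [Finset.sum_mul]
          _ < S lc := this
      have hlt : d < Real.logb 2 (S lc) := by
        have := Real.logb_lt_logb one_lt_two (Real.rpow_pos_of_pos two_pos d) hSgt
        rwa [Real.logb_rpow (by norm_num) (by norm_num)] at this
      have h1d' : 1/d < 0 := one_div_neg.2 hdneg
      have := mul_lt_mul_of_neg_left hlt h1d'
      calc (1/d) * Real.logb 2 (S lc) < (1/d) * d := this
        _ = 1 := by field_simp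
    · -- d > 0 : S lc < 2^d
      have hSlt : S lc < (2:ℝ) ^ d := by
        have : S lc < ∑ i, q i * (2:ℝ) ^ d := by
          simp only [hS_def]
          refine Finset.sum_lt_sum_of_nonempty Finset.univ_nonempty fun i _ => ?_
          refine mul_lt_mul_of_pos_left ?_ (hqpos i)
          refine (Real.rpow_lt_rpow_left_iff one_lt_two).2 ?_
          nlinarith [hthi i]
        calc S lc < ∑ i, q i * (2:ℝ) ^ d := this
          _ = (∑ i, q i) * (2:ℝ) ^ d := by rw [Finset.sum_mul]
          _ = (2:ℝ) ^ d := by rw [hqsum, one_mul]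
      have hlt : Real.logb 2 (S lc) < d := by
        have := Real.logb_lt_logb one_lt_two (hSpos lc) hSlt
        rwa [Real.logb_rpow (by norm_num) (by norm_num)] at this
      have h1d' : 0 < 1/d := by positivity
      calc (1/d) * Real.logb 2 (S lc) < (1/d) * d := mul_lt_mul_of_pos_left hlt h1d'
        _ = 1 := by field_simp
  constructor
  · rw [hgap lstar]
    exact hlow lstar hkraft
  · have h1 := hopt lc hkc
    have h2 := hgap lc
    linarith [hup]
end

section
/- For d > 0 fixed, the function that maps probability mass function p and Kraft-feasible integer lengths l to (1/d)·log₂(Σ_i p_i·2^(d·l_i)) is bounded below by the exchange of b and d form: specifically, for any Kraft-feasible real l, (1/d)·log₂(Σ_i p_i·2^(d·l_i)) ≥ (1+d)/d · log₂(Σ_i p_i^(1/(1+d))), with equality iff l_i = -(1/(1+d))·log₂ p_i + log₂(Σ_j p_j^(1/(1+d))) for all i. -/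
open Real Finset

theorem exp_average_lower_bound_with_equality (n : ℕ) (hn : 1 ≤ n) (p : Fin n → ℝ)
    (hp : ∀ i, 0 < p i) (hsum : ∑ i, p i = 1) (d : ℝ) (hd : 0 < d)
    (l : Fin n → ℝ) (hkraft : ∑ i, (2 : ℝ) ^ (-(l i)) ≤ 1) :
    (1 / d) * Real.logb 2 (∑ i, p i * (2 : ℝ) ^ (d * l i))
      ≥ ((1 + d) / d) * Real.logb 2 (∑ i, p i ^ (1 / (1 + d))) ∧
    ((1 / d) * Real.logb 2 (∑ i, p i * (2 : ℝ) ^ (d * l i))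
        = ((1 + d) / d) * Real.logb 2 (∑ i, p i ^ (1 / (1 + d)))
      ↔ ∀ i, l i = -(1 / (1 + d)) * Real.logb 2 (p i)
          + Real.logb 2 (∑ j, p j ^ (1 / (1 + d)))) := by
  have hd1 : (0:ℝ) < 1 + d := by linarith
  have hne : Nonempty (Fin n) := ⟨⟨0, hn⟩⟩
  set θ : ℝ := 1 / (1 + d) with hθdef
  have hθ0 : 0 < θ := by positivity
  have hθ1 : θ < 1 := by rw [hθdef, div_lt_one hd1]; linarith
  have hθd : θ * (1 + d) = 1 := by rw [hθdef]; field_simp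
  set S : ℝ := ∑ i, p i ^ θ with hSdef
  set A : ℝ := ∑ i, p i * (2:ℝ) ^ (d * l i) with hAdef
  set T : ℝ := ∑ i, (2:ℝ) ^ (-(l i)) with hTdef
  have hS : 0 < S := Finset.sum_pos (fun i _ => rpow_pos_of_pos (hp i) _) univ_nonempty
  have hA : 0 < A := Finset.sum_pos
    (fun i _ => mul_pos (hp i) (rpow_pos_of_pos two_pos _)) univ_nonempty
  have hT : 0 < T := Finset.sum_pos (fun i _ => rpow_pos_of_pos two_pos _) univ_nonempty
  set w : Fin n → ℝ := fun i => (2:ℝ) ^ (-(l i)) / T with hwdef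
  set x : Fin n → ℝ := fun i => T * (p i * (2:ℝ) ^ ((1 + d) * l i)) with hxdef
  have hw0 : ∀ i, 0 < w i := fun i => div_pos (rpow_pos_of_pos two_pos _) hT
  have hx0 : ∀ i, 0 < x i := fun i =>
    mul_pos hT (mul_pos (hp i) (rpow_pos_of_pos two_pos _))
  have hw1 : ∑ i, w i = 1 := by
    rw [hwdef, ← Finset.sum_div, ← hTdef, div_self hT.ne']
  have h2exp : ∀ i, (2:ℝ) ^ (-(l i)) * (2:ℝ) ^ ((1+d) * l i) = (2:ℝ) ^ (d * l i) := by
    intro i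
    rw [← Real.rpow_add two_pos]
    ring_nf
  have hwx : ∀ i, w i * x i = p i * (2:ℝ) ^ (d * l i) := by
    intro i
    simp only [hwdef, hxdef]
    rw [← h2exp i]
    field_simp
  have hwf : ∀ i, w i * (x i) ^ θ = T ^ (θ - 1) * p i ^ θ := by
    intro i
    have e1 : ((2:ℝ) ^ ((1+d) * l i)) ^ θ = (2:ℝ) ^ (l i) := by
      rw [← Real.rpow_mul (by norm_num : (0:ℝ) ≤ 2)]
      congr 1
      have : (1 + d) * l i * θ = (θ * (1 + d)) * l i := by ring
      rw [this, hθd, one_mul]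
    have e2 : T ^ (θ - 1) = T ^ θ / T := by
      rw [Real.rpow_sub hT, Real.rpow_one]
    have e3 : (2:ℝ) ^ (-(l i)) * (2:ℝ) ^ (l i) = 1 := by
      rw [← Real.rpow_add two_pos]
      simp
    simp only [hwdef, hxdef]
    rw [Real.mul_rpow hT.le (mul_pos (hp i) (rpow_pos_of_pos two_pos _)).le,
      Real.mul_rpow (hp i).le (rpow_pos_of_pos two_pos _).le, e1, e2]
    field_simp
    linear_combination p i ^ θ * e3
  have hAx : ∑ i, w i * x i = A := by
    rw [hAdef]; exact Finset.sum_congr rfl (fun i _ => hwx i)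
  have hSx : ∑ i, w i * (x i) ^ θ = T ^ (θ - 1) * S := by
    rw [hSdef, Finset.mul_sum]; exact Finset.sum_congr rfl (fun i _ => hwf i)
  have hjensen : ∑ i, w i * (x i) ^ θ ≤ (∑ i, w i * x i) ^ θ := by
    have hcc := (Real.strictConcaveOn_rpow hθ0 hθ1).concaveOn
    have := hcc.le_map_sum (t := Finset.univ) (w := w) (p := x)
      (fun i _ => (hw0 i).le) hw1 (fun i _ => Set.mem_Ici.mpr (hx0 i).le)
    simpa [smul_eq_mul] using this
  have hkey : T ^ (θ - 1) * S ≤ A ^ θ := by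
    rw [← hSx, ← hAx]; exact hjensen
  have hT1 : 1 ≤ T ^ (θ - 1) :=
    Real.one_le_rpow_of_pos_of_le_one_of_nonpos hT hkraft (by linarith)
  have hSA : S ≤ A ^ θ := by
    calc S = 1 * S := (one_mul S).symm
    _ ≤ T ^ (θ - 1) * S := mul_le_mul_of_nonneg_right hT1 hS.le
    _ ≤ A ^ θ := hkey
  have hmain : S ^ (1 + d) ≤ A := by
    have h := Real.rpow_le_rpow hS.le hSA hd1.le
    rwa [← Real.rpow_mul hA.le, hθd, Real.rpow_one] at h
  have hlogb : (1 + d) * Real.logb 2 S ≤ Real.logb 2 A := by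
    have h1 : Real.logb 2 (S ^ (1+d)) ≤ Real.logb 2 A :=
      Real.logb_le_logb_of_le one_lt_two (by positivity) hmain
    rwa [Real.logb_rpow_eq_mul_logb_of_pos hS] at h1
  constructor
  · rw [ge_iff_le]
    calc ((1+d)/d) * Real.logb 2 S = (1/d) * ((1+d) * Real.logb 2 S) := by ring
    _ ≤ (1/d) * Real.logb 2 A := by
        exact mul_le_mul_of_nonneg_left hlogb (by positivity)
  · have hred : (1/d) * Real.logb 2 A = ((1+d)/d) * Real.logb 2 S ↔ A = S ^ (1+d) := by
      constructor
      · intro h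
        have h' : Real.logb 2 A = Real.logb 2 S * (1 + d) := by
          field_simp at h
          linarith
        have hA2 : A = (2:ℝ) ^ Real.logb 2 A :=
          (Real.rpow_logb two_pos (by norm_num) hA).symm
        rw [hA2, h', Real.rpow_mul (by norm_num : (0:ℝ) ≤ 2),
          Real.rpow_logb two_pos (by norm_num) hS]
      · intro h
        rw [h, Real.logb_rpow_eq_mul_logb_of_pos hS]
        ring
    rw [hred]
    constructor
    · -- forward: A = S ^ (1+d) → formula for l
      intro hAS i
      have hAθ : A ^ θ = S := by
        rw [hAS, ← Real.rpow_mul hS.le]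
        have : (1 + d) * θ = 1 := by rw [mul_comm]; exact hθd
        rw [this, Real.rpow_one]
      have hTeq : T = 1 := by
        by_contra hneq
        have hTlt : T < 1 := lt_of_le_of_ne hkraft hneq
        have hgt : 1 < T ^ (θ - 1) :=
          (Real.one_lt_rpow_iff_of_pos hT).mpr (Or.inr ⟨hTlt, by linarith⟩)
        nlinarith [hkey, hS, hAθ]
      have hjeq : (∑ j, w j • x j) ^ θ ≤ ∑ j, w j • (x j) ^ θ := by
        simp only [smul_eq_mul]
        rw [hAx, hSx, hAθ, hTeq, Real.one_rpow, one_mul]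
      have hconst := (Real.strictConcaveOn_rpow hθ0 hθ1).eq_of_map_sum_eq
        (t := Finset.univ) (w := w) (p := x)
        (fun j _ => hw0 j) hw1 (fun j _ => Set.mem_Ici.mpr (hx0 j).le) hjeq
      set c : ℝ := x i with hcdef
      have hc0 : 0 < c := hx0 i
      have hxj : ∀ j, p j * (2:ℝ) ^ ((1+d) * l j) = c := by
        intro j
        have h := hconst (Finset.mem_univ j) (Finset.mem_univ i)
        rw [hcdef]
        rw [hxdef] at h ⊢
        simp only [hTeq, one_mul] at h ⊢
        exact h
      have hlj : ∀ j, l j = θ * (Real.logb 2 c - Real.logb 2 (p j)) := by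
        intro j
        have h2 : (2:ℝ) ^ ((1+d) * l j) = c / p j := by
          rw [eq_div_iff (hp j).ne']
          rw [mul_comm]
          exact hxj j
        have h3 : (1+d) * l j = Real.logb 2 c - Real.logb 2 (p j) := by
          have := congrArg (Real.logb 2) h2
          rwa [Real.logb_rpow (by norm_num) (by norm_num),
            Real.logb_div hc0.ne' (hp j).ne'] at this
        have h4 : l j = θ * ((1+d) * l j) := by
          have : θ * ((1+d) * l j) = (θ * (1+d)) * l j := by ring
          rw [this, hθd, one_mul]
        rw [h4, h3]
      have hcθ : c ^ θ = S := by
        have hTS : T = S / c ^ θ := by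
          rw [hTdef, hSdef, Finset.sum_div]
          refine Finset.sum_congr rfl (fun j _ => ?_)
          have : -(l j) = Real.logb 2 (p j / c) * θ := by
            rw [hlj j, Real.logb_div (hp j).ne' hc0.ne']
            ring
          rw [this, Real.rpow_mul (by norm_num : (0:ℝ) ≤ 2),
            Real.rpow_logb two_pos (by norm_num) (div_pos (hp j) hc0),
            Real.div_rpow (hp j).le hc0.le]
        have := hTeq
        rw [hTS] at this
        have hcθ0 : 0 < c ^ θ := Real.rpow_pos_of_pos hc0 θ
        field_simp at this
        linarith
      have hlogc : Real.logb 2 c = (1 + d) * Real.logb 2 S := by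
        have h := congrArg (Real.logb 2) hcθ
        rw [Real.logb_rpow_eq_mul_logb_of_pos hc0] at h
        have hθne : θ ≠ 0 := hθ0.ne'
        have : Real.logb 2 c = Real.logb 2 S / θ := by
          field_simp
          linarith
        rw [this, hθdef]
        field_simp
      rw [hlj i, hlogc]
      linear_combination Real.logb 2 S * hθd
    · -- backward: formula for l → A = S ^ (1+d)
      intro h
      have hpt : ∀ i, p i * (2:ℝ) ^ (d * l i) = p i ^ θ * S ^ d := by
        intro i
        rw [h i]
        have e1 : d * (-θ * Real.logb 2 (p i) + Real.logb 2 S)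
            = Real.logb 2 (p i) * (-(d * θ)) + Real.logb 2 S * d := by ring
        rw [e1, Real.rpow_add two_pos, Real.rpow_mul (by norm_num : (0:ℝ) ≤ 2),
          Real.rpow_mul (by norm_num : (0:ℝ) ≤ 2),
          Real.rpow_logb two_pos (by norm_num) (hp i),
          Real.rpow_logb two_pos (by norm_num) hS]
        have e2 : p i * p i ^ (-(d * θ)) = p i ^ θ := by
          have : p i * p i ^ (-(d * θ)) = p i ^ ((1:ℝ)) * p i ^ (-(d * θ)) := by
            rw [Real.rpow_one]
          rw [this, ← Real.rpow_add (hp i)]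
          congr 1
          linarith [hθd]
        rw [← mul_assoc, e2]
      have : A = S * S ^ d := by
        rw [hAdef, Finset.sum_congr rfl (fun i _ => hpt i), ← Finset.sum_mul, ← hSdef]
      rw [this, Real.rpow_add hS, Real.rpow_one]
end
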